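/- The following statements are equivalent: (1) Spec_S R is a noetherian topological space with respect to the S-flat topology; (2) the open subsets of Spec_S R with respect to the S-flat topology are exactly the sets V_S(I) where I ranges over the finitely generated ideals of R; (3) for every prime ideal P of R disjoint from S, Λ(P) = D_S(f) for some f ∈ R; (4) any arbitrary intersection of open subsets of the S-Zariski topology is open in the S-Zariski topology. -/

import Mathlib

/-- An ideal `P` is `S`-prime if `P ∩ S = ∅` and there is `s ∈ S` such that
whenever `a * b ∈ P`, either `s * a ∈ P` or `s * b ∈ P`. -/
def IsSPrime {R : Type*} [CommRing R] (S : Set R) (P : Ideal R) : Prop :=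
  (P : Set R) ∩ S = ∅ ∧ ∃ s ∈ S, ∀ a b : R, a * b ∈ P → s * a ∈ P ∨ s * b ∈ P

/-- The `S`-prime spectrum `Spec_S R`: the set of all `S`-prime ideals of `R`. -/
def SSpec {R : Type*} [CommRing R] (S : Set R) : Type _ :=
  {P : Ideal R // IsSPrime S P}

/-- The `S`-variety of an ideal `I`:
`V_S(I) = {P ∈ Spec_S R | s • I ⊆ P for some s ∈ S}`. -/
def SVar {R : Type*} [CommRing R] (S : Set R) (I : Ideal R) : Set (SSpec S) :=
  {P | ∃ s ∈ S, ∀ x ∈ I, s * x ∈ P.1}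

/-- The `S`-radical of an ideal `I`:
`√[S](I) = {a ∈ R | s * a ^ n ∈ I for some s ∈ S, n ∈ ℕ}`. -/
def SRad {R : Type*} [CommRing R] (S : Set R) (I : Ideal R) : Set R :=
  {a | ∃ s ∈ S, ∃ n : ℕ, s * a ^ n ∈ I}

/-- The `S`-Zariski topology on `Spec_S R`: the closed sets are exactly the `V_S(I)`. -/
def sZariskiTop {R : Type*} [CommRing R] (S : Set R) : TopologicalSpace (SSpec S) :=
  TopologicalSpace.generateFrom {U | ∃ I : Ideal R, U = (SVar S I)ᶜ}

/-- The `S`-flat topology on `Spec_S R`: the coarsest topology in which every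
`V_S(f)`, `f ∈ R`, is open. -/
def sFlatTop {R : Type*} [CommRing R] (S : Set R) : TopologicalSpace (SSpec S) :=
  TopologicalSpace.generateFrom {U | ∃ f : R, U = SVar S (Ideal.span {f})}

/-- An ideal `I` is `S`-radically finite if `√[S](I) = √[S](J)` for some finitely
generated ideal `J`. -/
def SRadFinite {R : Type*} [CommRing R] (S : Set R) (I : Ideal R) : Prop :=
  ∃ J : Ideal R, J.FG ∧ SRad S I = SRad S J

namespace SFlatAux

open Ideal TopologicalSpace

variable {R : Type*} [CommRing R] {S : Set R}

variable (S) in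
/-- The `S`-saturation of an ideal. -/
def sat (hS1 : (1 : R) ∈ S) (hSmul : ∀ s ∈ S, ∀ t ∈ S, s * t ∈ S) (I : Ideal R) :
    Ideal R where
  carrier := {a | ∃ s ∈ S, s * a ∈ I}
  zero_mem' := ⟨1, hS1, by simpa using I.zero_mem⟩
  add_mem' := by
    rintro a b ⟨s, hs, hsa⟩ ⟨t, ht, htb⟩
    refine ⟨s * t, hSmul s hs t ht, ?_⟩
    have h : s * t * (a + b) = t * (s * a) + s * (t * b) := by ring
    rw [h]
    exact I.add_mem (I.mul_mem_left _ hsa) (I.mul_mem_left _ htb)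
  smul_mem' := by
    rintro c a ⟨s, hs, hsa⟩
    refine ⟨s, hs, ?_⟩
    have h : s * (c • a) = c * (s * a) := by simp [smul_eq_mul]; ring
    rw [h]
    exact I.mul_mem_left _ hsa

variable (hS1 : (1 : R) ∈ S) (hSmul : ∀ s ∈ S, ∀ t ∈ S, s * t ∈ S)

include hS1 hSmul

lemma mem_sat {I : Ideal R} {a : R} : a ∈ sat S hS1 hSmul I ↔ ∃ s ∈ S, s * a ∈ I := Iff.rfl

lemma le_sat (I : Ideal R) : I ≤ sat S hS1 hSmul I := fun x hx => ⟨1, hS1, by simpa using hx⟩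

lemma sat_mono {I J : Ideal R} (h : I ≤ J) : sat S hS1 hSmul I ≤ sat S hS1 hSmul J := by
  rintro x ⟨s, hs, hsx⟩; exact ⟨s, hs, h hsx⟩

lemma sat_sat (I : Ideal R) : sat S hS1 hSmul (sat S hS1 hSmul I) = sat S hS1 hSmul I := by
  refine le_antisymm ?_ (le_sat hS1 hSmul _)
  rintro x ⟨s, hs, t, ht, hts⟩
  refine ⟨t * s, hSmul t ht s hs, ?_⟩
  rwa [mul_assoc]

lemma sat_mul_le (I J : Ideal R) :
    sat S hS1 hSmul I * sat S hS1 hSmul J ≤ sat S hS1 hSmul (I * J) := by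
  rw [Ideal.mul_le]
  rintro r ⟨u, hu, hur⟩ w ⟨v, hv, hvw⟩
  refine ⟨u * v, hSmul u hu v hv, ?_⟩
  have h : u * v * (r * w) = (u * r) * (v * w) := by ring
  rw [h]
  exact Ideal.mul_mem_mul hur hvw

lemma not_mem_of_mem_S (q : SSpec S) {s : R} (hs : s ∈ S) : s ∉ q.1 := fun h =>
  Set.eq_empty_iff_forall_notMem.mp q.2.1 s ⟨h, hs⟩

lemma mem_SVar_iff (q : SSpec S) (I : Ideal R) :
    q ∈ SVar S I ↔ I ≤ sat S hS1 hSmul q.1 := by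
  constructor
  · rintro ⟨s, hs, h⟩ x hx
    exact ⟨s, hs, h x hx⟩
  · intro h
    obtain ⟨w, hw, hwP⟩ := q.2.2
    refine ⟨w, hw, fun x hx => ?_⟩
    obtain ⟨t, ht, hta⟩ := h hx
    rcases hwP t x hta with h1 | h2
    · exact absurd h1 (not_mem_of_mem_S hS1 hSmul q (hSmul w hw t ht))
    · exact h2

lemma sat_isPrime (q : SSpec S) : (sat S hS1 hSmul q.1).IsPrime := by
  obtain ⟨w, hw, hwP⟩ := q.2.2
  constructor
  · intro h
    have h1 : (1 : R) ∈ sat S hS1 hSmul q.1 := h ▸ trivial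
    obtain ⟨s, hs, hs1⟩ := h1
    rw [mul_one] at hs1
    exact not_mem_of_mem_S hS1 hSmul q hs hs1
  · rintro x y ⟨s, hs, hsxy⟩
    have h : (s * x) * y ∈ q.1 := by rw [mul_assoc]; exact hsxy
    rcases hwP (s * x) y h with h1 | h2
    · left; exact ⟨w * s, hSmul w hw s hs, by rwa [mul_assoc]⟩
    · right; exact ⟨w, hw, h2⟩

lemma sat_S_disjoint (q : SSpec S) {s : R} (hs : s ∈ S) : s ∉ sat S hS1 hSmul q.1 := by
  rintro ⟨t, ht, hts⟩
  exact not_mem_of_mem_S hS1 hSmul q (hSmul t ht s hs) hts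

lemma isSPrime_of_prime {P : Ideal R} (hP : P.IsPrime) (hdisj : ∀ s ∈ S, s ∉ P) :
    IsSPrime S P := by
  refine ⟨Set.eq_empty_iff_forall_notMem.mpr ?_, 1, hS1, fun a b hab => ?_⟩
  · rintro x ⟨hx, hxS⟩; exact hdisj x hxS hx
  · rcases hP.mem_or_mem hab with h | h
    · left; rwa [one_mul]
    · right; rwa [one_mul]

lemma sat_of_prime {P : Ideal R} (hP : P.IsPrime) (hdisj : ∀ s ∈ S, s ∉ P) :
    sat S hS1 hSmul P = P := by
  refine le_antisymm ?_ (le_sat hS1 hSmul _)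
  rintro x ⟨s, hs, hsx⟩
  rcases hP.mem_or_mem hsx with h | h
  · exact absurd h (hdisj s hs)
  · exact h

/-- The canonical prime point with the same saturation. -/
noncomputable def liftq (h1 : (1 : R) ∈ S) (h2 : ∀ s ∈ S, ∀ t ∈ S, s * t ∈ S)
    (q : SSpec S) : SSpec S :=
  ⟨sat S h1 h2 q.1, isSPrime_of_prime h1 h2 (sat_isPrime h1 h2 q)
    (fun s hs => sat_S_disjoint h1 h2 q hs)⟩

lemma sat_liftq (q : SSpec S) :
    sat S hS1 hSmul (liftq hS1 hSmul q).1 = sat S hS1 hSmul q.1 := sat_sat hS1 hSmul _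

lemma SVar_mul (I J : Ideal R) : SVar S (I * J) = SVar S I ∪ SVar S J := by
  ext q
  rw [Set.mem_union, mem_SVar_iff hS1 hSmul, mem_SVar_iff hS1 hSmul, mem_SVar_iff hS1 hSmul]
  exact (sat_isPrime hS1 hSmul q).mul_le

lemma SVar_fg_isOpen {J : Ideal R} (hJ : J.FG) : @IsOpen _ (sFlatTop S) (SVar S J) := by
  letI := sFlatTop S
  obtain ⟨T, rfl⟩ := hJ
  have h2 : SVar S (Ideal.span (T : Set R)) = ⋂ f ∈ T, SVar S (Ideal.span {f}) := by
    ext q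
    simp only [Set.mem_iInter, mem_SVar_iff hS1 hSmul, Ideal.span_le,
      Set.subset_def, Finset.mem_coe, SetLike.mem_coe]
    refine ⟨fun h i hi x hx => ?_, fun h x hx => h x hx x rfl⟩
    rw [Set.mem_singleton_iff] at hx
    exact hx ▸ h i hi
  rw [h2]
  exact isOpen_biInter_finset fun f _ => isOpen_generateFrom_of_mem ⟨f, rfl⟩

lemma flat_open_iff {U : Set (SSpec S)} :
    @IsOpen _ (sFlatTop S) U ↔
      ∀ q ∈ U, ∃ J : Ideal R, J.FG ∧ q ∈ SVar S J ∧ SVar S J ⊆ U := by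
  constructor
  · intro h
    have h' : TopologicalSpace.GenerateOpen {U | ∃ f : R, U = SVar S (Ideal.span {f})} U := h
    clear h
    induction h' with
    | basic u hu =>
      rcases hu with ⟨f, rfl⟩
      exact fun q hq => ⟨Ideal.span {f}, ⟨{f}, by simp⟩, hq, subset_rfl⟩
    | univ =>
      exact fun q _ => ⟨⊥, Submodule.fg_bot, (mem_SVar_iff hS1 hSmul q ⊥).2 bot_le,
        Set.subset_univ _⟩
    | inter u v hu hv ihu ihv =>
      intro q hq
      obtain ⟨J1, h1fg, h1m, h1s⟩ := ihu q hq.1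
      obtain ⟨J2, h2fg, h2m, h2s⟩ := ihv q hq.2
      refine ⟨J1 ⊔ J2, Submodule.FG.sup h1fg h2fg, ?_, fun r hr => ?_⟩
      · exact (mem_SVar_iff hS1 hSmul q _).2
          (sup_le ((mem_SVar_iff hS1 hSmul q _).1 h1m) ((mem_SVar_iff hS1 hSmul q _).1 h2m))
      · have hr' := (mem_SVar_iff hS1 hSmul r _).1 hr
        exact ⟨h1s ((mem_SVar_iff hS1 hSmul r _).2 (le_sup_left.trans hr')),
          h2s ((mem_SVar_iff hS1 hSmul r _).2 (le_sup_right.trans hr'))⟩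
    | sUnion s hs ih =>
      intro q hq
      obtain ⟨u, hu, hqu⟩ := hq
      obtain ⟨J, hfg, hm, hsub⟩ := ih u hu q hqu
      exact ⟨J, hfg, hm, hsub.trans (Set.subset_sUnion_of_mem hu)⟩
  · intro h
    letI := sFlatTop S
    choose! J hfg hmem hsub using h
    have hU : U = ⋃ (q : SSpec S) (_ : q ∈ U), SVar S (J q) := by
      apply subset_antisymm
      · intro q hq
        exact Set.mem_biUnion hq (hmem q hq)
      · exact Set.iUnion₂_subset fun q hq => hsub q hq
    rw [hU]
    exact isOpen_biUnion fun q hq => SVar_fg_isOpen hS1 hSmul (hfg q hq)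

lemma flat_mem_closure_iff (p q : SSpec S) :
    q ∈ @closure _ (sFlatTop S) {p} ↔ sat S hS1 hSmul q.1 ≤ sat S hS1 hSmul p.1 := by
  letI := sFlatTop S
  rw [mem_closure_iff]
  constructor
  · intro h a ha
    obtain ⟨x, hx, hxp⟩ := h (SVar S (Ideal.span {a}))
      (SVar_fg_isOpen hS1 hSmul ⟨{a}, by simp⟩)
      ((mem_SVar_iff hS1 hSmul q _).2 ((Ideal.span_singleton_le_iff_mem _).2 ha))
    rw [Set.mem_singleton_iff] at hxp
    subst hxp
    exact (Ideal.span_singleton_le_iff_mem _).1 ((mem_SVar_iff hS1 hSmul x _).1 hx)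
  · intro h o ho hqo
    obtain ⟨J, hfg, hm, hs⟩ := (flat_open_iff hS1 hSmul).1 ho q hqo
    have hp : p ∈ SVar S J :=
      (mem_SVar_iff hS1 hSmul p _).2 (((mem_SVar_iff hS1 hSmul q _).1 hm).trans h)
    exact ⟨p, hs hp, rfl⟩

lemma zar_basic_isOpen (I : Ideal R) : @IsOpen _ (sZariskiTop S) (SVar S I)ᶜ :=
  TopologicalSpace.isOpen_generateFrom_of_mem ⟨I, rfl⟩

lemma zar_open_iff {U : Set (SSpec S)} :
    @IsOpen _ (sZariskiTop S) U ↔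
      ∀ q ∈ U, ∃ I : Ideal R, q ∈ (SVar S I)ᶜ ∧ (SVar S I)ᶜ ⊆ U := by
  constructor
  · intro h
    have h' : TopologicalSpace.GenerateOpen {U | ∃ I : Ideal R, U = (SVar S I)ᶜ} U := h
    clear h
    induction h' with
    | basic u hu =>
      rcases hu with ⟨I, rfl⟩
      exact fun q hq => ⟨I, hq, subset_rfl⟩
    | univ =>
      refine fun q _ => ⟨⊤, fun hq => ?_, Set.subset_univ _⟩
      exact (sat_isPrime hS1 hSmul q).ne_top
        (top_le_iff.1 ((mem_SVar_iff hS1 hSmul q _).1 hq))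
    | inter u v hu hv ihu ihv =>
      intro q hq
      obtain ⟨I1, h1m, h1s⟩ := ihu q hq.1
      obtain ⟨I2, h2m, h2s⟩ := ihv q hq.2
      refine ⟨I1 * I2, ?_, ?_⟩
      · rw [Set.mem_compl_iff, SVar_mul hS1 hSmul]
        rintro (h | h)
        exacts [h1m h, h2m h]
      · rw [SVar_mul hS1 hSmul, Set.compl_union]
        exact fun r hr => ⟨h1s hr.1, h2s hr.2⟩
    | sUnion s hs ih =>
      intro q hq
      obtain ⟨u, hu, hqu⟩ := hq
      obtain ⟨I, hm, hsub⟩ := ih u hu q hqu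
      exact ⟨I, hm, hsub.trans (Set.subset_sUnion_of_mem hu)⟩
  · intro h
    letI := sZariskiTop S
    choose! I hmem hsub using h
    have hU : U = ⋃ (q : SSpec S) (_ : q ∈ U), (SVar S (I q))ᶜ := by
      apply subset_antisymm
      · intro q hq
        exact Set.mem_biUnion hq (hmem q hq)
      · exact Set.iUnion₂_subset fun q hq => hsub q hq
    rw [hU]
    exact isOpen_biUnion fun q _ => zar_basic_isOpen hS1 hSmul _

omit hS1 hSmul in
lemma fg_multiset_prod (m : Multiset (Ideal R)) (h : ∀ I ∈ m, I.FG) : m.prod.FG := by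
  induction m using Multiset.induction_on with
  | empty => exact ⟨{1}, by simp [Ideal.one_eq_top, Ideal.span_singleton_one]⟩
  | cons a s ih =>
    rw [Multiset.prod_cons]
    exact Submodule.FG.mul (h a (Multiset.mem_cons_self a s))
      (ih fun I hI => h I (Multiset.mem_cons_of_mem hI))

omit hS1 hSmul in
lemma finset_exists_ub {c : Set (Ideal R)} (hchain : IsChain (· ≤ ·) c) {y : Ideal R}
    (hy : y ∈ c) (T : Finset R) :
    (∀ x ∈ T, ∃ a ∈ c, x ∈ a) → ∃ a ∈ c, ∀ x ∈ T, x ∈ a := by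
  classical
  induction T using Finset.induction_on with
  | empty => exact fun _ => ⟨y, hy, by simp⟩
  | @insert x T hx ih =>
    intro h
    obtain ⟨a1, ha1c, ha1⟩ := ih fun z hz => h z (Finset.mem_insert_of_mem hz)
    obtain ⟨a2, ha2c, ha2⟩ := h x (Finset.mem_insert_self x T)
    obtain ⟨a3, ha3c, h13, h23⟩ := hchain.directedOn a1 ha1c a2 ha2c
    exact ⟨a3, ha3c, fun z hz => by
      rcases Finset.mem_insert.1 hz with rfl | hz
      · exact h23 ha2
      · exact h13 (ha1 z hz)⟩

lemma isCompact_setOf_sat (E : Set R) :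
    @IsCompact _ (sFlatTop S) {q : SSpec S | ∀ f ∈ E, f ∈ sat S hS1 hSmul q.1} := by
  classical
  letI := sFlatTop S
  set C : Set (SSpec S) := {q | ∀ f ∈ E, f ∈ sat S hS1 hSmul q.1} with hCdef
  rw [isCompact_iff_finite_subcover]
  intro ι U hU hcov
  have hx : ∀ q : C, ∃ (i : ι) (Jq : Ideal R),
      Jq.FG ∧ q.1 ∈ SVar S Jq ∧ SVar S Jq ⊆ U i := by
    intro q
    obtain ⟨i, hi⟩ := Set.mem_iUnion.1 (hcov q.2)
    obtain ⟨J, h1, h2, h3⟩ := (flat_open_iff hS1 hSmul).1 (hU i) q.1 hi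
    exact ⟨i, J, h1, h2, h3⟩
  choose idx J hJfg hJmem hJsub using hx
  have key : ∃ m : Multiset C, (m.map J).prod ≤ sat S hS1 hSmul (Ideal.span E) := by
    by_contra hkey
    push_neg at hkey
    set A : Set (Ideal R) := {a | Ideal.span E ≤ a ∧ sat S hS1 hSmul a = a ∧
      ∀ m : Multiset C, ¬ (m.map J).prod ≤ a} with hAdef
    have h0 : sat S hS1 hSmul (Ideal.span E) ∈ A :=
      ⟨le_sat hS1 hSmul _, sat_sat hS1 hSmul _, hkey⟩
    have hchainc : ∀ c ⊆ A, IsChain (· ≤ ·) c → ∀ y ∈ c, ∃ ub ∈ A, ∀ z ∈ c, z ≤ ub := by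
      intro c hcA hchain y hy
      refine ⟨sSup c, ⟨(hcA hy).1.trans (le_sSup hy), ?_, ?_⟩, fun z hz => le_sSup hz⟩
      · -- saturatedness of sSup
        have hmem : ∀ x : R, x ∈ sSup c → ∃ b ∈ c, x ∈ b := by
          intro x hxs
          haveI : Nonempty c := ⟨⟨y, hy⟩⟩
          rw [sSup_eq_iSup'] at hxs
          obtain ⟨⟨b, hb⟩, hxb⟩ :=
            (Submodule.mem_iSup_of_directed _ hchain.directed).1 hxs
          exact ⟨b, hb, hxb⟩
        refine le_antisymm ?_ (le_sat hS1 hSmul _)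
        rintro x ⟨s, hs, hsx⟩
        obtain ⟨b, hbc, hxb⟩ := hmem _ hsx
        exact le_sSup hbc ((hcA hbc).2.1 ▸ (⟨s, hs, hxb⟩ : x ∈ sat S hS1 hSmul b))
      · intro m hm
        obtain ⟨T, hT⟩ := fg_multiset_prod (m.map J) fun I hI => by
          obtain ⟨q, _, rfl⟩ := Multiset.mem_map.1 hI
          exact hJfg q
        have hTs : ∀ x ∈ T, ∃ b ∈ c, x ∈ b := by
          intro x hxT
          have hx2 : (x : R) ∈ sSup c := hm (hT ▸ Ideal.subset_span hxT)
          haveI : Nonempty c := ⟨⟨y, hy⟩⟩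
          rw [sSup_eq_iSup'] at hx2
          obtain ⟨⟨b, hb⟩, hxb⟩ :=
            (Submodule.mem_iSup_of_directed _ hchain.directed).1 hx2
          exact ⟨b, hb, hxb⟩
        obtain ⟨b, hbc, hb⟩ := finset_exists_ub hchain hy T hTs
        refine (hcA hbc).2.2 m ?_
        rw [← hT]
        exact Ideal.span_le.2 fun x hxT => hb x hxT
    obtain ⟨a, -, h2⟩ := zorn_le_nonempty₀ A hchainc _ h0
    have haA := h2.1
    have hamax : ∀ b ∈ A, a ≤ b → b ≤ a := fun b hb hab => h2.2 hb hab
    obtain ⟨haE, hasat, haprod⟩ := haA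
    have hane : a ≠ ⊤ := by
      intro h
      exact haprod 0 (by simp [h])
    have haprime : a.IsPrime := by
      refine ⟨hane, ?_⟩
      intro x y hxy
      by_contra hcon
      push_neg at hcon
      obtain ⟨hx, hy⟩ := hcon
      have hnb : ∀ z : R, z ∉ a →
          ∃ m : Multiset C, (m.map J).prod ≤ sat S hS1 hSmul (a ⊔ Ideal.span {z}) := by
        intro z hz
        by_contra hb
        push_neg at hb
        have hbA : sat S hS1 hSmul (a ⊔ Ideal.span {z}) ∈ A :=
          ⟨haE.trans (le_sup_left.trans (le_sat hS1 hSmul _)), sat_sat hS1 hSmul _, hb⟩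
        have hle : sat S hS1 hSmul (a ⊔ Ideal.span {z}) ≤ a :=
          hamax _ hbA (le_sup_left.trans (le_sat hS1 hSmul _))
        exact hz (hle (le_sat hS1 hSmul _
          (Submodule.mem_sup_right (Ideal.subset_span rfl))))
      obtain ⟨m1, hm1⟩ := hnb x hx
      obtain ⟨m2, hm2⟩ := hnb y hy
      have hprod : (a ⊔ Ideal.span {x}) * (a ⊔ Ideal.span {y}) ≤ a := by
        rw [Ideal.sup_mul]
        refine sup_le Ideal.mul_le_left ?_
        rw [Ideal.mul_sup]
        refine sup_le Ideal.mul_le_right ?_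
        rw [Ideal.span_singleton_mul_span_singleton]
        exact (Ideal.span_singleton_le_iff_mem _).2 hxy
      refine haprod (m1 + m2) ?_
      rw [Multiset.map_add, Multiset.prod_add]
      calc (m1.map J).prod * (m2.map J).prod
          ≤ sat S hS1 hSmul (a ⊔ Ideal.span {x}) * sat S hS1 hSmul (a ⊔ Ideal.span {y}) :=
            Ideal.mul_mono hm1 hm2
        _ ≤ sat S hS1 hSmul ((a ⊔ Ideal.span {x}) * (a ⊔ Ideal.span {y})) :=
            sat_mul_le hS1 hSmul _ _
        _ ≤ sat S hS1 hSmul a := sat_mono hS1 hSmul hprod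
        _ = a := hasat
    have haS : ∀ s ∈ S, s ∉ a := by
      intro s hs hsa
      have h1 : (1 : R) ∈ sat S hS1 hSmul a := ⟨s, hs, by simpa using hsa⟩
      rw [hasat] at h1
      exact hane ((Ideal.eq_top_iff_one a).2 h1)
    set P : SSpec S := ⟨a, isSPrime_of_prime hS1 hSmul haprime haS⟩ with hPdef
    have hPC : P ∈ C := by
      intro f hf
      exact le_sat hS1 hSmul _ (haE (Ideal.subset_span hf))
    have hJP : J ⟨P, hPC⟩ ≤ a := by
      have := (mem_SVar_iff hS1 hSmul P _).1 (hJmem ⟨P, hPC⟩)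
      rwa [show sat S hS1 hSmul P.1 = a from hasat] at this
    exact haprod {⟨P, hPC⟩} (by simpa using hJP)
  obtain ⟨m, hm⟩ := key
  refine ⟨(m.map idx).toFinset, ?_⟩
  intro r hr
  have h1 : Ideal.span E ≤ sat S hS1 hSmul r.1 := Ideal.span_le.2 fun f hf => hr f hf
  have h2 : sat S hS1 hSmul (Ideal.span E) ≤ sat S hS1 hSmul r.1 := by
    have := sat_mono hS1 hSmul h1
    rwa [sat_sat hS1 hSmul] at this
  have h3 : (m.map J).prod ≤ sat S hS1 hSmul r.1 := hm.trans h2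
  obtain ⟨q, hqm, hq⟩ := ((sat_isPrime hS1 hSmul r).multiset_prod_map_le J).1 h3
  exact Set.mem_biUnion (Multiset.mem_toFinset.2 (Multiset.mem_map_of_mem idx hqm))
    (hJsub q ((mem_SVar_iff hS1 hSmul r _).2 hq))

end SFlatAux

open SFlatAux

/-- TFAE: (1) `Spec_S R` is noetherian for the `S`-flat topology;
(2) the `S`-flat open sets are exactly the `V_S(I)` with `I` finitely generated;
(3) for every prime `P` disjoint from `S`, `Λ(P) = D_S(f)` for some `f ∈ R`;
(4) arbitrary intersections of `S`-Zariski open sets are `S`-Zariski open. -/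
theorem sFlat_noetherian_tfae {R : Type*} [CommRing R] [Nontrivial R] (S : Set R)
    (hS0 : (0 : R) ∉ S) (hS1 : (1 : R) ∈ S) (hSmul : ∀ s ∈ S, ∀ t ∈ S, s * t ∈ S) :
    List.TFAE
      [@TopologicalSpace.NoetherianSpace (SSpec S) (sFlatTop S),
       ∀ U : Set (SSpec S),
         @IsOpen (SSpec S) (sFlatTop S) U ↔ ∃ I : Ideal R, I.FG ∧ U = SVar S I,
       ∀ p : SSpec S, p.1.IsPrime →
         ∃ f : R, @closure (SSpec S) (sFlatTop S) {p} = (SVar S (Ideal.span {f}))ᶜ,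
       ∀ 𝒰 : Set (Set (SSpec S)), (∀ U ∈ 𝒰, @IsOpen (SSpec S) (sZariskiTop S) U) →
         @IsOpen (SSpec S) (sZariskiTop S) (⋂₀ 𝒰)] := by
  classical
  tfae_have 1 → 2 := by
    intro h1 U
    letI := sFlatTop S
    constructor
    · intro hU
      haveI : TopologicalSpace.NoetherianSpace (SSpec S) := h1
      have hc : IsCompact U := TopologicalSpace.NoetherianSpace.isCompact U
      have hx : ∀ q : U, ∃ J : Ideal R, J.FG ∧ q.1 ∈ SVar S J ∧ SVar S J ⊆ U :=
        fun q => (flat_open_iff hS1 hSmul).1 hU q.1 q.2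
      choose J hJfg hJmem hJsub using hx
      obtain ⟨t, ht⟩ := hc.elim_finite_subcover (fun q : U => SVar S (J q))
        (fun q => SVar_fg_isOpen hS1 hSmul (hJfg q))
        (fun r hr => Set.mem_iUnion.2 ⟨⟨r, hr⟩, hJmem ⟨r, hr⟩⟩)
      refine ⟨∏ q ∈ t, J q,
        Finset.prod_induction _ _ (fun a b ha hb => Submodule.FG.mul ha hb)
          ⟨{1}, by simp [Ideal.one_eq_top, Ideal.span_singleton_one]⟩ (fun q _ => hJfg q), ?_⟩
      apply subset_antisymm
      · intro r hr
        obtain ⟨q, hqt, hq⟩ := Set.mem_iUnion₂.1 (ht hr)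
        refine (mem_SVar_iff hS1 hSmul r _).2 ?_
        exact le_trans (le_trans Ideal.prod_le_inf (Finset.inf_le hqt))
          ((mem_SVar_iff hS1 hSmul r _).1 hq)
      · intro r hr
        obtain ⟨q, hqt, hq⟩ :=
          ((sat_isPrime hS1 hSmul r).prod_le).1 ((mem_SVar_iff hS1 hSmul r _).1 hr)
        exact hJsub q ((mem_SVar_iff hS1 hSmul r _).2 hq)
    · rintro ⟨I, hfg, rfl⟩
      exact SVar_fg_isOpen hS1 hSmul hfg
  tfae_have 2 → 3 := by
    intro h2 p hp
    letI := sFlatTop S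
    obtain ⟨I, hIfg, hIeq⟩ := (h2 (closure {p})ᶜ).1 isClosed_closure.isOpen_compl
    have hclo : closure {p} = (SVar S I)ᶜ := by rw [← hIeq, compl_compl]
    have hpmem : p ∈ closure {p} := subset_closure rfl
    have hpI : ¬ I ≤ sat S hS1 hSmul p.1 := by
      intro h
      exact (hclo ▸ hpmem) ((mem_SVar_iff hS1 hSmul p I).2 h)
    obtain ⟨T, hT⟩ := hIfg
    have hf : ∃ f ∈ T, f ∉ sat S hS1 hSmul p.1 := by
      by_contra hc
      push_neg at hc
      exact hpI (hT ▸ Ideal.span_le.2 fun x hx => hc x hx)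
    obtain ⟨f, hfT, hfp⟩ := hf
    refine ⟨f, subset_antisymm ?_ ?_⟩
    · refine closure_minimal ?_ (SVar_fg_isOpen hS1 hSmul ⟨{f}, by simp⟩).isClosed_compl
      intro x hx
      rw [Set.mem_singleton_iff] at hx
      subst hx
      intro hmem
      exact hfp ((Ideal.span_singleton_le_iff_mem _).1 ((mem_SVar_iff hS1 hSmul x _).1 hmem))
    · intro q hq
      rw [hclo]
      intro hqI
      have hfq : f ∈ sat S hS1 hSmul q.1 :=
        (mem_SVar_iff hS1 hSmul q I).1 hqI (hT ▸ Ideal.subset_span hfT)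
      exact hq ((mem_SVar_iff hS1 hSmul q _).2 ((Ideal.span_singleton_le_iff_mem _).2 hfq))
  tfae_have 3 → 1 := by
    intro h3
    letI := sFlatTop S
    rw [TopologicalSpace.noetherianSpace_iff_opens]
    intro V
    have h3' : ∀ q : SSpec S, ∃ f : R,
        closure {liftq hS1 hSmul q} = (SVar S (Ideal.span {f}))ᶜ :=
      fun q => h3 (liftq hS1 hSmul q) (sat_isPrime hS1 hSmul q)
    choose F hF using h3'
    have hVopen : IsOpen (V : Set (SSpec S)) := V.2
    have hkey : (V : Set (SSpec S)) =
        {r : SSpec S | ∀ f ∈ F '' (V : Set (SSpec S))ᶜ, f ∈ sat S hS1 hSmul r.1} := by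
      apply subset_antisymm
      · rintro r hr f ⟨q, hq, rfl⟩
        by_contra hfr
        have hrcl : r ∈ closure {liftq hS1 hSmul q} := by
          rw [hF q]
          intro hmem
          exact hfr ((Ideal.span_singleton_le_iff_mem _).1
            ((mem_SVar_iff hS1 hSmul r _).1 hmem))
        have hsat : sat S hS1 hSmul r.1 ≤ sat S hS1 hSmul q.1 := by
          have h := (flat_mem_closure_iff hS1 hSmul _ r).1 hrcl
          rwa [sat_liftq] at h
        obtain ⟨Jr, hJfg, hJm, hJs⟩ := (flat_open_iff hS1 hSmul).1 hVopen r hr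
        exact hq (hJs ((mem_SVar_iff hS1 hSmul q _).2
          (((mem_SVar_iff hS1 hSmul r _).1 hJm).trans hsat)))
      · intro r hr
        by_contra hrW
        have h1 : F r ∈ sat S hS1 hSmul r.1 := hr _ ⟨r, hrW, rfl⟩
        have h2 : r ∉ closure {liftq hS1 hSmul r} := by
          rw [hF r]
          intro h
          exact h ((mem_SVar_iff hS1 hSmul r _).2
            ((Ideal.span_singleton_le_iff_mem _).2 h1))
        exact h2 ((flat_mem_closure_iff hS1 hSmul _ r).2 (by rw [sat_liftq]))
    show IsCompact (V : Set (SSpec S))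
    rw [hkey]
    exact isCompact_setOf_sat hS1 hSmul _
  tfae_have 3 → 4 := by
    intro h3 𝒰 h𝒰
    letI := sZariskiTop S
    have h3' : ∀ q : SSpec S, ∃ f : R,
        @closure _ (sFlatTop S) {liftq hS1 hSmul q} = (SVar S (Ideal.span {f}))ᶜ :=
      fun q => h3 (liftq hS1 hSmul q) (sat_isPrime hS1 hSmul q)
    choose F hF using h3'
    have hsub : ∀ p ∈ ⋂₀ 𝒰, (SVar S (Ideal.span {F p}))ᶜ ⊆ ⋂₀ 𝒰 := by
      intro p hp q hq U hU
      have hqcl : q ∈ @closure _ (sFlatTop S) {liftq hS1 hSmul p} := by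
        rw [hF p]; exact hq
      have hsatq : sat S hS1 hSmul q.1 ≤ sat S hS1 hSmul p.1 := by
        have h := (flat_mem_closure_iff hS1 hSmul _ q).1 hqcl
        rwa [sat_liftq] at h
      obtain ⟨I, hIm, hIs⟩ := (zar_open_iff hS1 hSmul).1 (h𝒰 U hU) p (hp U hU)
      refine hIs ?_
      intro hqI
      exact hIm ((mem_SVar_iff hS1 hSmul p _).2
        (((mem_SVar_iff hS1 hSmul q _).1 hqI).trans hsatq))
    have heq : ⋂₀ 𝒰 = ⋃ (p : SSpec S) (_ : p ∈ ⋂₀ 𝒰), (SVar S (Ideal.span {F p}))ᶜ := by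
      apply subset_antisymm
      · intro p hp
        refine Set.mem_biUnion hp ?_
        rw [← hF p]
        exact (flat_mem_closure_iff hS1 hSmul _ p).2 (by rw [sat_liftq])
      · exact Set.iUnion₂_subset hsub
    rw [heq]
    exact isOpen_biUnion fun p _ => zar_basic_isOpen hS1 hSmul _
  tfae_have 4 → 3 := by
    intro h4 p hp
    have hpdisj : ∀ s ∈ S, s ∉ p.1 := fun s hs => not_mem_of_mem_S hS1 hSmul p hs
    have hsatp : sat S hS1 hSmul p.1 = p.1 := sat_of_prime hS1 hSmul hp hpdisj
    set 𝒰 : Set (Set (SSpec S)) :=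
      (fun a : R => (SVar S (Ideal.span {a}))ᶜ) '' {a : R | a ∉ p.1} with h𝒰
    have hopen : ∀ U ∈ 𝒰, @IsOpen _ (sZariskiTop S) U := by
      rintro U ⟨a, _, rfl⟩
      exact zar_basic_isOpen hS1 hSmul _
    have hΛ : @closure _ (sFlatTop S) {p} = ⋂₀ 𝒰 := by
      ext q
      rw [flat_mem_closure_iff hS1 hSmul p q]
      constructor
      · rintro h U ⟨a, ha, rfl⟩ hqa
        have haq : a ∈ sat S hS1 hSmul q.1 :=
          (Ideal.span_singleton_le_iff_mem _).1 ((mem_SVar_iff hS1 hSmul q _).1 hqa)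
        exact ha (hsatp ▸ h haq)
      · intro h
        rw [hsatp]
        intro a haq
        by_contra hap
        exact h _ ⟨a, hap, rfl⟩
          ((mem_SVar_iff hS1 hSmul q _).2 ((Ideal.span_singleton_le_iff_mem _).2 haq))
    have hΛopen := h4 𝒰 hopen
    rw [← hΛ] at hΛopen
    have hpΛ : p ∈ @closure _ (sFlatTop S) {p} :=
      (flat_mem_closure_iff hS1 hSmul p p).2 le_rfl
    obtain ⟨I, hIm, hIs⟩ := (zar_open_iff hS1 hSmul).1 hΛopen p hpΛ
    have hInle : ¬ I ≤ p.1 := by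
      intro h
      exact hIm ((mem_SVar_iff hS1 hSmul p _).2 (h.trans (le_sat hS1 hSmul p.1)))
    obtain ⟨f, hfI, hfp⟩ := SetLike.not_le_iff_exists.1 hInle
    refine ⟨f, subset_antisymm ?_ ?_⟩
    · intro q hq
      have hsq : sat S hS1 hSmul q.1 ≤ p.1 := by
        rw [← hsatp]
        exact (flat_mem_closure_iff hS1 hSmul p q).1 hq
      intro hqf
      exact hfp (hsq ((Ideal.span_singleton_le_iff_mem _).1
        ((mem_SVar_iff hS1 hSmul q _).1 hqf)))
    · intro q hq
      refine hIs ?_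
      intro hqI
      exact hq ((mem_SVar_iff hS1 hSmul q _).2 ((Ideal.span_singleton_le_iff_mem _).2
        (((mem_SVar_iff hS1 hSmul q I).1 hqI) hfI)))
  tfae_finish
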